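/- Let M ∈ ℂ^{N×N} be a Hermitian Toeplitz matrix, determined by m_k := M_{k+1,1} for 0 ≤ k ≤ N−1 and m_{−k} := conj(m_k), so that M_{a,b} = m_{a−b}. Define the spectral function f(θ) = Σ_{k=−(N−1)}^{N−1} m_k e^{−ikθ}. Then the spectral norm satisfies ‖M‖₂ ≤ sup_{θ ∈ [−π,π]} |f(θ)|. -/

import Mathlib

open Matrix

noncomputable section

/-- Spectral norm (largest singular value) of a complex matrix, realized as the operator
norm of the induced linear map between Euclidean spaces. -/
def specNorm {m n : ℕ} (A : Matrix (Fin m) (Fin n) ℂ) : ℝ :=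
  ‖LinearMap.toContinuousLinearMap (Matrix.toEuclideanLin A)‖

end

open Complex intervalIntegral Real

lemma int_exp (n : ℤ) :
    ∫ θ : ℝ in (-Real.pi)..Real.pi, Complex.exp (Complex.I * n * θ) =
      if n = 0 then (2 * Real.pi : ℂ) else 0 := by
  split_ifs with h
  · subst h
    simp [intervalIntegral.integral_const, two_mul, Complex.ofReal_mul]
  · have hc : (Complex.I * n) ≠ 0 := by
      simp [Complex.I_ne_zero, h]
    simp_rw [mul_assoc]
    rw [show (fun θ : ℝ => Complex.exp (Complex.I * (n * θ))) = fun θ : ℝ => Complex.exp ((Complex.I * n) * θ) by funext θ; ring_nf, integral_exp_mul_complex hc]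
    have : Complex.exp (Complex.I * n * Real.pi) = Complex.exp (Complex.I * n * (-Real.pi : ℝ)) := by
      rw [show (Complex.I * n * ((-Real.pi : ℝ) : ℂ)) = Complex.I * n * Real.pi + (-n : ℤ) * (2 * Real.pi * Complex.I) by push_cast; ring,
        Complex.exp_add, Complex.exp_int_mul_two_pi_mul_I, mul_one]
    rw [this, sub_self, zero_div]

lemma cont_exp (w : ℂ) : Continuous (fun θ : ℝ => Complex.exp (w * θ)) := by
  fun_prop

lemma int_sum_exp {ι : Type*} (s : Finset ι) (c : ι → ℂ) (n : ι → ℤ) :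
    ∫ θ : ℝ in (-Real.pi)..Real.pi, ∑ i ∈ s, c i * Complex.exp (Complex.I * n i * θ) =
      ∑ i ∈ s, c i * (if n i = 0 then (2 * Real.pi : ℂ) else 0) := by
  rw [intervalIntegral.integral_finset_sum]
  · refine Finset.sum_congr rfl fun i _ => ?_
    rw [intervalIntegral.integral_const_mul, int_exp]
  · intro i _
    exact (Continuous.intervalIntegrable (by fun_prop) _ _)

lemma quad_bound {N : ℕ} (m : ℤ → ℂ) {C : ℝ}
    (hC : ∀ θ ∈ Set.Icc (-Real.pi) Real.pi,
      ‖∑ k ∈ Finset.Icc (-((N : ℤ) - 1)) ((N : ℤ) - 1),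
        m k * Complex.exp (-Complex.I * k * θ)‖ ≤ C)
    (x : Fin N → ℂ) :
    ‖∑ a : Fin N, ∑ b : Fin N,
        (starRingEnd ℂ) (x a) * x b * m ((a : ℤ) - (b : ℤ))‖
      ≤ C * ∑ a, ‖x a‖ ^ 2 := by
  set F : ℝ → ℂ := fun θ => ∑ k ∈ Finset.Icc (-((N : ℤ) - 1)) ((N : ℤ) - 1),
      m k * Complex.exp (-Complex.I * k * θ) with hF
  set g : ℝ → ℂ := fun θ => ∑ b : Fin N, x b * Complex.exp (Complex.I * (-(b : ℤ)) * θ) with hg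
  -- conjugate of g
  have hconj : ∀ θ : ℝ, (starRingEnd ℂ) (g θ)
      = ∑ a : Fin N, (starRingEnd ℂ) (x a) * Complex.exp (Complex.I * (a : ℤ) * θ) := by
    intro θ
    rw [hg, map_sum]
    refine Finset.sum_congr rfl fun a _ => ?_
    rw [_root_.map_mul, ← Complex.exp_conj]
    congr 1
    simp [_root_.map_mul, Complex.conj_I]
  -- |g θ|^2 as a double sum of exponentials
  have hgg : ∀ θ : ℝ, (starRingEnd ℂ) (g θ) * g θ
      = ∑ p : Fin N × Fin N, ((starRingEnd ℂ) (x p.1) * x p.2)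
          * Complex.exp (Complex.I * ((((p.1 : ℤ) - (p.2 : ℤ) : ℤ)) : ℂ) * θ) := by
    intro θ
    rw [hconj, hg, Finset.sum_mul_sum, ← Finset.sum_product', Finset.univ_product_univ]
    refine Finset.sum_congr rfl fun p _ => ?_
    rw [mul_mul_mul_comm, ← Complex.exp_add]
    congr 1
    push_cast
    ring_nf
  -- F θ * |g θ|^2 as a triple sum of exponentials
  have hFgg : ∀ θ : ℝ, F θ * ((starRingEnd ℂ) (g θ) * g θ)
      = ∑ p ∈ (Finset.Icc (-((N : ℤ) - 1)) ((N : ℤ) - 1) ×ˢ Finset.univ :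
            Finset (ℤ × (Fin N × Fin N))),
          ((starRingEnd ℂ) (x p.2.1) * x p.2.2 * m p.1)
            * Complex.exp (Complex.I * (((((p.2.1 : ℤ) - (p.2.2 : ℤ)) - p.1 : ℤ)) : ℂ) * θ) := by
    intro θ
    rw [hgg, hF, Finset.sum_mul_sum, ← Finset.sum_product']
    refine Finset.sum_congr rfl fun p _ => ?_
    rw [show m p.1 * Complex.exp (-Complex.I * p.1 * θ)
        * ((starRingEnd ℂ) (x p.2.1) * x p.2.2
            * Complex.exp (Complex.I * ((((p.2.1 : ℤ) - (p.2.2 : ℤ) : ℤ)) : ℂ) * θ))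
        = ((starRingEnd ℂ) (x p.2.1) * x p.2.2 * m p.1)
            * (Complex.exp (Complex.I * ((((p.2.1 : ℤ) - (p.2.2 : ℤ) : ℤ)) : ℂ) * θ)
                * Complex.exp (-Complex.I * p.1 * θ)) by ring, ← Complex.exp_add]
    congr 1
    push_cast
    ring_nf
  -- complex Parseval
  have hcont_g : Continuous g := by
    rw [hg]; exact continuous_finset_sum _ fun b _ => by fun_prop
  have hcont_F : Continuous F := by
    rw [hF]; exact continuous_finset_sum _ fun k _ => by fun_prop
  have hg2 : (∫ θ : ℝ in (-Real.pi)..Real.pi, (starRingEnd ℂ) (g θ) * g θ)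
      = (2 * Real.pi : ℂ) * ∑ a, ((starRingEnd ℂ) (x a) * x a) := by
    simp_rw [hgg]
    rw [int_sum_exp (Finset.univ : Finset (Fin N × Fin N))
      (fun p => (starRingEnd ℂ) (x p.1) * x p.2) (fun p => (p.1 : ℤ) - (p.2 : ℤ)),
      Fintype.sum_prod_type, Finset.mul_sum]
    refine Finset.sum_congr rfl fun a _ => ?_
    rw [Finset.sum_eq_single a]
    · simp [mul_comm]
    · intro b _ hb
      have hne : ¬(((a : Fin N) : ℤ) - ((b : Fin N) : ℤ) = 0) := by
        rw [sub_eq_zero]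
        exact_mod_cast fun h => hb (Fin.val_injective (by exact_mod_cast h)).symm
      simp [hne]
    · simp
  -- main integral identity
  have hFg2 : (∫ θ : ℝ in (-Real.pi)..Real.pi, F θ * ((starRingEnd ℂ) (g θ) * g θ))
      = (2 * Real.pi : ℂ) * ∑ a : Fin N, ∑ b : Fin N,
          (starRingEnd ℂ) (x a) * x b * m ((a : ℤ) - (b : ℤ)) := by
    simp_rw [hFgg]
    rw [int_sum_exp (Finset.Icc (-((N : ℤ) - 1)) ((N : ℤ) - 1) ×ˢ Finset.univ)
      (fun p : ℤ × Fin N × Fin N => (starRingEnd ℂ) (x p.2.1) * x p.2.2 * m p.1)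
      (fun p : ℤ × Fin N × Fin N => ((p.2.1 : ℤ) - (p.2.2 : ℤ)) - p.1), Finset.sum_product,
      Finset.sum_comm, Fintype.sum_prod_type, Finset.mul_sum]
    refine Finset.sum_congr rfl fun a _ => ?_
    rw [Finset.mul_sum]
    refine Finset.sum_congr rfl fun b _ => ?_
    have hmem : (a : ℤ) - (b : ℤ) ∈ Finset.Icc (-((N : ℤ) - 1)) ((N : ℤ) - 1) := by
      have h1 : ((a : ℤ)) < N := by exact_mod_cast a.isLt
      have h2 : ((b : ℤ)) < N := by exact_mod_cast b.isLt
      have h3 : (0 : ℤ) ≤ (a : ℤ) := Int.natCast_nonneg _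
      have h4 : (0 : ℤ) ≤ (b : ℤ) := Int.natCast_nonneg _
      exact Finset.mem_Icc.mpr ⟨by omega, by omega⟩
    rw [Finset.sum_eq_single ((a : ℤ) - (b : ℤ))]
    · simp [mul_comm]
    · intro k _ hk
      have hne : ¬((a : ℤ) - (b : ℤ) - k = 0) := fun h => hk (by omega)
      simp [hne]
    · exact fun h => absurd hmem h
  -- real Parseval
  have hgR : (∫ θ : ℝ in (-Real.pi)..Real.pi, ‖g θ‖ ^ 2)
      = 2 * Real.pi * ∑ a, ‖x a‖ ^ 2 := by
    apply Complex.ofReal_injective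
    rw [← intervalIntegral.integral_ofReal]
    have : ∀ θ : ℝ, ((‖g θ‖ ^ 2 : ℝ) : ℂ) = (starRingEnd ℂ) (g θ) * g θ := by
      intro θ
      rw [← Complex.normSq_eq_norm_sq, Complex.normSq_eq_conj_mul_self]
    simp_rw [this]
    rw [hg2]
    push_cast
    congr 1
    refine Finset.sum_congr rfl fun a _ => ?_
    rw [show ((‖x a‖ : ℂ)) ^ 2 = ((‖x a‖ ^ 2 : ℝ) : ℂ) by push_cast; ring,
      ← Complex.normSq_eq_norm_sq, Complex.normSq_eq_conj_mul_self]
  -- the bound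
  have hnormle : ‖∫ θ : ℝ in (-Real.pi)..Real.pi,
        F θ * ((starRingEnd ℂ) (g θ) * g θ)‖
      ≤ 2 * Real.pi * (C * ∑ a, ‖x a‖ ^ 2) := by
    calc ‖∫ θ : ℝ in (-Real.pi)..Real.pi, F θ * ((starRingEnd ℂ) (g θ) * g θ)‖
        ≤ ∫ θ : ℝ in (-Real.pi)..Real.pi, ‖F θ * ((starRingEnd ℂ) (g θ) * g θ)‖ := by
          exact intervalIntegral.norm_integral_le_integral_norm
            (by linarith [Real.pi_pos])
      _ ≤ ∫ θ : ℝ in (-Real.pi)..Real.pi, C * ‖g θ‖ ^ 2 := by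
          apply intervalIntegral.integral_mono_on (by linarith [Real.pi_pos])
          · exact ((hcont_F.mul ((Complex.continuous_conj.comp hcont_g).mul
              hcont_g)).norm).intervalIntegrable _ _
          · exact (Continuous.intervalIntegrable (by fun_prop) _ _)
          · intro θ hθ
            rw [norm_mul, norm_mul, RCLike.norm_conj]
            have h1 : ‖F θ‖ ≤ C := by exact hC θ hθ
            have h2 : (0 : ℝ) ≤ ‖g θ‖ * ‖g θ‖ := mul_nonneg (norm_nonneg _) (norm_nonneg _)
            calc ‖F θ‖ * (‖g θ‖ * ‖g θ‖) ≤ C * (‖g θ‖ * ‖g θ‖) :=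
                mul_le_mul_of_nonneg_right h1 h2
              _ = C * ‖g θ‖ ^ 2 := by ring
      _ = 2 * Real.pi * (C * ∑ a, ‖x a‖ ^ 2) := by
          rw [intervalIntegral.integral_const_mul, hgR]; ring
  rw [hFg2] at hnormle
  rw [norm_mul] at hnormle
  have h2pi : ‖(2 * Real.pi : ℂ)‖ = 2 * Real.pi := by
    rw [show ((2 * Real.pi : ℂ)) = ((2 * Real.pi : ℝ) : ℂ) by push_cast; ring,
      Complex.norm_real, Real.norm_eq_abs, abs_of_pos (by positivity)]
  rw [h2pi] at hnormle
  have hpi : (0 : ℝ) < 2 * Real.pi := by positivity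
  exact (mul_le_mul_iff_right₀ hpi).mp hnormle

theorem hermitian_toeplitz_specNorm_le_sup_spectral_function
    {N : ℕ} (m : ℤ → ℂ) (hm : ∀ k : ℤ, m (-k) = (starRingEnd ℂ) (m k))
    (M : Matrix (Fin N) (Fin N) ℂ)
    (hM : ∀ a b : Fin N, M a b = m ((a : ℤ) - (b : ℤ))) :
    specNorm M ≤ sSup ((fun θ : ℝ => ‖
        (∑ k ∈ Finset.Icc (-((N : ℤ) - 1)) ((N : ℤ) - 1),
          m k * Complex.exp (-Complex.I * (k : ℂ) * (θ : ℂ)))‖) ''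
      Set.Icc (-Real.pi) Real.pi) := by
  classical
  set f : ℝ → ℝ := fun θ : ℝ => ‖
      (∑ k ∈ Finset.Icc (-((N : ℤ) - 1)) ((N : ℤ) - 1),
        m k * Complex.exp (-Complex.I * (k : ℂ) * (θ : ℂ)))‖ with hf
  set C : ℝ := sSup (f '' Set.Icc (-Real.pi) Real.pi) with hCdef
  -- C is an upper bound on the image
  have hfc : Continuous f := by
    rw [hf]
    exact (continuous_finset_sum _ fun k _ => by fun_prop).norm
  have hbdd : BddAbove (f '' Set.Icc (-Real.pi) Real.pi) :=
    (isCompact_Icc.image hfc).bddAbove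
  have hC : ∀ θ ∈ Set.Icc (-Real.pi) Real.pi,
      ‖∑ k ∈ Finset.Icc (-((N : ℤ) - 1)) ((N : ℤ) - 1),
        m k * Complex.exp (-Complex.I * (k : ℂ) * (θ : ℂ))‖ ≤ C := fun θ hθ =>
    le_csSup hbdd ⟨θ, hθ, rfl⟩
  have hC0 : 0 ≤ C := by
    have h0 : (0 : ℝ) ∈ Set.Icc (-Real.pi) Real.pi :=
      ⟨by linarith [Real.pi_pos], by linarith [Real.pi_pos]⟩
    exact le_trans (norm_nonneg _) (hC 0 h0)
  -- M is Hermitian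
  have hH : M.IsHermitian := by
    ext a b
    rw [Matrix.conjTranspose_apply, hM, hM,
      show ((a : ℤ) - (b : ℤ)) = -((b : ℤ) - (a : ℤ)) by ring, hm]
    rfl
  -- the quadratic-form bound, for plain vectors
  have hquad : ∀ x : Fin N → ℂ,
      ‖∑ a : Fin N, ∑ b : Fin N,
        (starRingEnd ℂ) (x a) * x b * m ((a : ℤ) - (b : ℤ))‖
      ≤ C * ∑ a, ‖x a‖ ^ 2 := fun x => quad_bound m hC x
  -- eigenvalues are bounded by C
  have heig : ∀ i : Fin N, |hH.eigenvalues i| ≤ C := by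
    intro i
    set v : Fin N → ℂ := ⇑(hH.eigenvectorBasis i) with hv
    have hMv : M *ᵥ v = hH.eigenvalues i • v := hH.mulVec_eigenvectorBasis i
    have hnv : ∑ a, ‖v a‖ ^ 2 = 1 := by
      have h1 : ‖hH.eigenvectorBasis i‖ = 1 := hH.eigenvectorBasis.orthonormal.1 i
      rw [EuclideanSpace.norm_eq] at h1
      have := congrArg (fun t : ℝ => t ^ 2) h1
      simp only [Real.sq_sqrt (Finset.sum_nonneg fun a _ => sq_nonneg _)] at this
      simpa using this
    have hSval : (∑ a : Fin N, ∑ b : Fin N,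
        (starRingEnd ℂ) (v a) * v b * m ((a : ℤ) - (b : ℤ)))
        = ((hH.eigenvalues i : ℝ) : ℂ) := by
      have : ∀ a : Fin N, ∑ b : Fin N, (starRingEnd ℂ) (v a) * v b * m ((a : ℤ) - (b : ℤ))
          = (starRingEnd ℂ) (v a) * ((hH.eigenvalues i : ℝ) : ℂ) * v a := by
        intro a
        have : ∑ b : Fin N, (starRingEnd ℂ) (v a) * v b * m ((a : ℤ) - (b : ℤ))
            = (starRingEnd ℂ) (v a) * (M *ᵥ v) a := by
          rw [Matrix.mulVec, dotProduct, Finset.mul_sum]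
          exact Finset.sum_congr rfl fun b _ => by rw [hM]; ring
        rw [this, hMv]
        simp [Pi.smul_apply, Complex.real_smul]
        ring
      rw [Finset.sum_congr rfl fun a _ => this a]
      have : ∑ a : Fin N, (starRingEnd ℂ) (v a) * ((hH.eigenvalues i : ℝ) : ℂ) * v a
          = ((hH.eigenvalues i : ℝ) : ℂ) * ∑ a : Fin N, (starRingEnd ℂ) (v a) * v a := by
        rw [Finset.mul_sum]; exact Finset.sum_congr rfl fun a _ => by ring
      rw [this]
      have hs : ∑ a : Fin N, (starRingEnd ℂ) (v a) * v a
          = ((∑ a, ‖v a‖ ^ 2 : ℝ) : ℂ) := by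
        push_cast
        refine Finset.sum_congr rfl fun a _ => ?_
        rw [show ((‖v a‖ : ℂ)) ^ 2 = ((‖v a‖ ^ 2 : ℝ) : ℂ) by
          push_cast; ring, ← Complex.normSq_eq_norm_sq, Complex.normSq_eq_conj_mul_self]
      rw [hs, hnv]
      simp
    have := hquad v
    rw [hSval, hnv, mul_one] at this
    simpa [Complex.norm_real] using this
  -- operator norm bound
  rw [specNorm]
  apply ContinuousLinearMap.opNorm_le_bound _ hC0
  intro x
  simp only [LinearMap.coe_toContinuousLinearMap']
  set b := hH.eigenvectorBasis with hb
  have hsym : (Matrix.toEuclideanLin M).IsSymmetric :=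
    Matrix.isHermitian_iff_isSymmetric.mp hH
  -- coordinates of T x
  have hrepr : ∀ i : Fin N, b.repr (Matrix.toEuclideanLin M x) i
      = ((hH.eigenvalues i : ℝ) : ℂ) * b.repr x i := by
    intro i
    rw [OrthonormalBasis.repr_apply_apply, OrthonormalBasis.repr_apply_apply,
      ← hsym (b i) x]
    have hTb : Matrix.toEuclideanLin M (b i) = (hH.eigenvalues i : ℝ) • (b i) := by
      apply (WithLp.equiv 2 (Fin N → ℂ)).injective
      funext a
      have := congrFun (hH.mulVec_eigenvectorBasis i) a
      simpa [Matrix.toEuclideanLin_apply] using this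
    rw [hTb, RCLike.real_smul_eq_coe_smul (K := ℂ), inner_smul_left]
    simp [RCLike.conj_ofReal]
  have hxnorm : ∀ y : EuclideanSpace ℂ (Fin N), ‖y‖ = Real.sqrt (∑ i, ‖b.repr y i‖ ^ 2) := by
    intro y
    rw [← b.repr.norm_map y, EuclideanSpace.norm_eq]
  rw [hxnorm (Matrix.toEuclideanLin M x), hxnorm x]
  rw [show C * Real.sqrt (∑ i, ‖b.repr x i‖ ^ 2)
      = Real.sqrt (C ^ 2 * ∑ i, ‖b.repr x i‖ ^ 2) by
    rw [Real.sqrt_mul (sq_nonneg _), Real.sqrt_sq hC0]]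
  apply Real.sqrt_le_sqrt
  rw [Finset.mul_sum]
  apply Finset.sum_le_sum
  intro i _
  rw [hrepr i, norm_mul]
  have h1 : ‖((hH.eigenvalues i : ℝ) : ℂ)‖ ≤ C := by
    rw [Complex.norm_real, Real.norm_eq_abs]
    exact heig i
  calc (‖((hH.eigenvalues i : ℝ) : ℂ)‖ * ‖b.repr x i‖) ^ 2
      = ‖((hH.eigenvalues i : ℝ) : ℂ)‖ ^ 2 * ‖b.repr x i‖ ^ 2 := by ring
    _ ≤ C ^ 2 * ‖b.repr x i‖ ^ 2 := by
        apply mul_le_mul_of_nonneg_right _ (sq_nonneg _)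
        exact pow_le_pow_left₀ (norm_nonneg _) h1 2
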